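/- Let B = UUᵀ ∈ ℝ^{n×n} and R ∈ ℝ^{m×m}, with m < n, be symmetric positive-definite circulant matrices, with U the symmetric square root of B, and let H ∈ ℝ^{m×n} be a uniform selection operator with n = ζm. If S = I_n + Uᵀ Hᵀ R^{-1} H U, then S has the eigenvalue 1 with multiplicity at least n − m, and its remaining m eigenvalues are 1 + λ_i(H B Hᵀ)/λ_i(R) for i in {0,...,m-1}, where eigenvalues of the circulant matrices H B Hᵀ and R are taken with respect to the common m-point Fourier basis. -/

import Mathlib

open Matrix Polynomial

/-- The (unnormalised-frequency) `i`-th Fourier eigenvector of size-`m` circulant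
matrices: `f^(i)_p = (1/√m) exp(-2πI i p / m)`. -/
noncomputable def fourierVec (m : ℕ) [NeZero m] (i : ZMod m) : ZMod m → ℂ :=
  fun p => (1 / (Real.sqrt m : ℂ)) *
    Complex.exp (-(2 * Real.pi * Complex.I * (i.val : ℂ) * (p.val : ℂ)) / m)

/-- The `i`-th Fourier eigenvalue of a (circulant) matrix `A`, i.e. the `i`-th DFT
coefficient of its first column: `λ_i(A) = Σ_k A k 0 · exp(2πI i k / m)`. -/
noncomputable def fourierEig {m : ℕ} [NeZero m] (A : Matrix (ZMod m) (ZMod m) ℂ)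
    (i : ZMod m) : ℂ :=
  ∑ k : ZMod m, A k 0 * Complex.exp (2 * Real.pi * Complex.I * (i.val : ℂ) * (k.val : ℂ) / m)

/-- A matrix indexed by `ZMod m` is circulant iff it is invariant under simultaneous
cyclic shifts of rows and columns. -/
def IsCirculant {m : ℕ} {α : Type*} (A : Matrix (ZMod m) (ZMod m) α) : Prop :=
  ∀ i j d : ZMod m, A (i + d) (j + d) = A i j

/-- The uniform selection operator `H : ℝ^{m×n}` picking every `ζ`-th component:
`(Hx)_p = x_{ζ p}`. -/
noncomputable def selectionOp (ζ m n : ℕ) [NeZero m] [NeZero n] :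
    Matrix (ZMod m) (ZMod n) ℝ :=
  Matrix.of fun p q => if q.val = ζ * p.val then 1 else 0

/-- The periodic second-difference (Laplacian) matrix with grid spacing `h`,
stencil `(1, -2, 1)/h²` with periodic boundary conditions. -/
noncomputable def lap (m : ℕ) [NeZero m] (h : ℝ) : Matrix (ZMod m) (ZMod m) ℝ :=
  Matrix.of fun i j =>
    ((if i = j then (-2 : ℝ) else 0) + (if i = j + 1 then 1 else 0) +
      (if j = i + 1 then 1 else 0)) / h ^ 2

/-- The diffusion-modelled covariance matrix
`(σ² ν L / h) (I - L² Δ_h)^{-M}` on an `m`-point periodic grid. -/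
noncomputable def diffCov (m : ℕ) [NeZero m] (σ ν L h : ℝ) (M : ℕ) :
    Matrix (ZMod m) (ZMod m) ℝ :=
  (σ ^ 2 * ν * L / h) • ((1 - (L ^ 2) • lap m h) ^ M)⁻¹

/-- The spectral condition number `κ(A) = λ_max(A)/λ_min(A)` (via the real spectrum). -/
noncomputable def condNum {k : Type*} [Fintype k] [DecidableEq k]
    (A : Matrix k k ℝ) : ℝ :=
  sSup (spectrum ℝ A) / sInf (spectrum ℝ A)

/-! ### Auxiliary: roots of unity -/

noncomputable def ww (m : ℕ) : ℂ := Complex.exp (2 * Real.pi * Complex.I / m)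

lemma ww_pow (m : ℕ) [NeZero m] : ww m ^ m = 1 :=
  (Complex.isPrimitiveRoot_exp m (NeZero.ne m)).pow_eq_one

lemma ww_mod (m : ℕ) [NeZero m] (j : ℕ) : ww m ^ j = ww m ^ (j % m) :=
  pow_eq_pow_mod j (ww_pow m)

noncomputable def ee (m : ℕ) [NeZero m] (a : ZMod m) : ℂ := ww m ^ a.val

lemma ee_nat (m : ℕ) [NeZero m] (j : ℕ) : ee m (j : ZMod m) = ww m ^ j := by
  rw [ee, ZMod.val_natCast, ← ww_mod]

lemma ee_add (m : ℕ) [NeZero m] (a b : ZMod m) : ee m (a + b) = ee m a * ee m b := by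
  have h : a + b = ((a.val + b.val : ℕ) : ZMod m) := by
    push_cast [ZMod.natCast_val, ZMod.cast_id]; ring
  rw [h, ee_nat, pow_add, ee, ee]

lemma ee_zero (m : ℕ) [NeZero m] : ee m 0 = 1 := by simp [ee]

lemma ee_mul_neg (m : ℕ) [NeZero m] (a : ZMod m) : ee m a * ee m (-a) = 1 := by
  rw [← ee_add]; simp [ee_zero]

lemma ee_inv (m : ℕ) [NeZero m] (a : ZMod m) : (ee m a)⁻¹ = ee m (-a) :=
  inv_eq_of_mul_eq_one_right (ee_mul_neg m a)

lemma ee_mul (m : ℕ) [NeZero m] (a b : ZMod m) : ee m (a * b) = (ww m ^ a.val) ^ b.val := by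
  rw [ee, ZMod.val_mul, ← ww_mod, pow_mul]

lemma sum_ee (m : ℕ) [NeZero m] (a : ZMod m) :
    ∑ p : ZMod m, ee m (a * p) = if a = 0 then (m : ℂ) else 0 := by
  have hsum : ∑ p : ZMod m, ee m (a * p) = ∑ j ∈ Finset.range m, (ww m ^ a.val) ^ j := by
    refine Finset.sum_nbij' (fun p => p.val) (fun j => (j : ZMod m)) ?_ ?_ ?_ ?_ ?_
    · intro p _; exact Finset.mem_range.mpr (ZMod.val_lt p)
    · intro j _; exact Finset.mem_univ _
    · intro p _; exact ZMod.natCast_rightInverse p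
    · intro j hj; exact ZMod.val_cast_of_lt (Finset.mem_range.mp hj)
    · intro p _; rw [ee_mul]
  rw [hsum]
  by_cases ha : a = 0
  · simp [ha]
  · rw [if_neg ha]
    have hne : ww m ^ a.val ≠ 1 := by
      refine (Complex.isPrimitiveRoot_exp m (NeZero.ne m)).pow_ne_one_of_pos_of_lt ?_
        (ZMod.val_lt a)
      exact fun h => ha ((ZMod.val_eq_zero a).mp h)
    rw [geom_sum_eq hne]
    rw [← pow_mul, mul_comm, pow_mul, ww_pow, one_pow]
    simp

/-! ### The Fourier matrix and its inverse -/

lemma exp_eq_ee (m : ℕ) [NeZero m] (i k : ZMod m) :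
    Complex.exp (2 * Real.pi * Complex.I * (i.val : ℂ) * (k.val : ℂ) / m) = ee m (i * k) := by
  rw [ee_mul, ← pow_mul, ww, ← Complex.exp_nat_mul]
  push_cast
  ring_nf

lemma exp_neg_eq_ee (m : ℕ) [NeZero m] (i p : ZMod m) :
    Complex.exp (-(2 * Real.pi * Complex.I * (i.val : ℂ) * (p.val : ℂ)) / m)
      = ee m (-(i * p)) := by
  rw [← ee_inv, ← exp_eq_ee, ← Complex.exp_neg]
  ring_nf

noncomputable def Fm (m : ℕ) [NeZero m] : Matrix (ZMod m) (ZMod m) ℂ :=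
  Matrix.of fun p i => (1 / (Real.sqrt m : ℂ)) * ee m (-(i * p))

noncomputable def Gm (m : ℕ) [NeZero m] : Matrix (ZMod m) (ZMod m) ℂ :=
  Matrix.of fun i p => (1 / (Real.sqrt m : ℂ)) * ee m (i * p)

lemma sqrt_fact (m : ℕ) [NeZero m] :
    (1 / (Real.sqrt m : ℂ)) * (1 / (Real.sqrt m : ℂ)) = 1 / (m : ℂ) := by
  rw [div_mul_div_comm, one_mul]
  congr 1
  rw [← Complex.ofReal_mul, Real.mul_self_sqrt (Nat.cast_nonneg m)]
  push_cast; ring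

lemma m_ne_zero (m : ℕ) [NeZero m] : (m : ℂ) ≠ 0 := Nat.cast_ne_zero.mpr (NeZero.ne m)

lemma Gm_mul_Fm (m : ℕ) [NeZero m] : Gm m * Fm m = 1 := by
  ext i j
  simp only [Matrix.mul_apply, Gm, Fm, Matrix.of_apply]
  have : ∀ p : ZMod m, (1 / (Real.sqrt m : ℂ)) * ee m (i * p) *
      ((1 / (Real.sqrt m : ℂ)) * ee m (-(j * p)))
      = (1 / (m : ℂ)) * ee m ((i - j) * p) := by
    intro p
    have h : (i - j) * p = i * p + -(j * p) := by ring
    rw [h, ee_add]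
    rw [show (1 / (Real.sqrt m : ℂ)) * ee m (i * p) * ((1 / (Real.sqrt m : ℂ)) * ee m (-(j * p)))
      = ((1 / (Real.sqrt m : ℂ)) * (1 / (Real.sqrt m : ℂ))) * (ee m (i * p) * ee m (-(j * p)))
        by ring, sqrt_fact]
  rw [Finset.sum_congr rfl (fun p _ => this p), ← Finset.mul_sum, sum_ee]
  by_cases h : i = j
  · simp [h, Matrix.one_apply, sub_self, one_div, inv_mul_cancel₀ (m_ne_zero m)]
  · have : ¬ (i - j = 0) := fun hc => h (sub_eq_zero.mp hc)
    simp [Matrix.one_apply, h, this]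

lemma Fm_mul_Gm (m : ℕ) [NeZero m] : Fm m * Gm m = 1 := by
  ext p q
  simp only [Matrix.mul_apply, Fm, Gm, Matrix.of_apply]
  have : ∀ i : ZMod m, (1 / (Real.sqrt m : ℂ)) * ee m (-(i * p)) *
      ((1 / (Real.sqrt m : ℂ)) * ee m (i * q))
      = (1 / (m : ℂ)) * ee m ((q - p) * i) := by
    intro i
    have h : (q - p) * i = -(i * p) + i * q := by ring
    rw [h, ee_add]
    rw [show (1 / (Real.sqrt m : ℂ)) * ee m (-(i * p)) * ((1 / (Real.sqrt m : ℂ)) * ee m (i * q))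
      = ((1 / (Real.sqrt m : ℂ)) * (1 / (Real.sqrt m : ℂ))) * (ee m (-(i * p)) * ee m (i * q))
        by ring, sqrt_fact]
  rw [Finset.sum_congr rfl (fun i _ => this i), ← Finset.mul_sum, sum_ee]
  by_cases h : p = q
  · simp [h, Matrix.one_apply, sub_self, one_div, inv_mul_cancel₀ (m_ne_zero m)]
  · have : ¬ (q - p = 0) := fun hc => h (sub_eq_zero.mp hc).symm
    simp [Matrix.one_apply, h, this]

lemma fourierEig_eq (m : ℕ) [NeZero m] (A : Matrix (ZMod m) (ZMod m) ℂ) (i : ZMod m) :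
    fourierEig A i = ∑ k : ZMod m, A k 0 * ee m (i * k) := by
  unfold fourierEig
  exact Finset.sum_congr rfl fun k _ => by rw [exp_eq_ee]

lemma circ_mul_Fm (m : ℕ) [NeZero m] (A : Matrix (ZMod m) (ZMod m) ℂ) (hA : IsCirculant A) :
    A * Fm m = Fm m * Matrix.diagonal (fourierEig A) := by
  ext p i
  rw [Matrix.mul_diagonal]
  simp only [Matrix.mul_apply, Fm, Matrix.of_apply]
  have hshift : ∀ q : ZMod m, A p q = A (p - q) 0 := by
    intro q
    have := hA (p - q) 0 q
    rwa [sub_add_cancel, zero_add] at this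
  calc ∑ q : ZMod m, A p q * ((1 / (Real.sqrt m : ℂ)) * ee m (-(i * q)))
      = ∑ k : ZMod m, A k 0 * ((1 / (Real.sqrt m : ℂ)) * (ee m (-(i * p)) * ee m (i * k))) := by
        refine (Fintype.sum_equiv (Equiv.subLeft p) _ _ fun k => ?_).symm
        simp only [Equiv.subLeft_apply]
        rw [hshift (p - k), sub_sub_cancel]
        congr 1
        rw [← ee_add]
        congr 2
        ring
    _ = (1 / (Real.sqrt m : ℂ)) * ee m (-(i * p)) * fourierEig A i := by
        rw [fourierEig_eq, Finset.mul_sum]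
        refine Finset.sum_congr rfl fun k _ => by ring

/-! ### Generic characteristic polynomial lemmas -/

section CharpolyLemmas

variable {k R : Type*} [Fintype k] [DecidableEq k] [CommRing R]

lemma my_charmatrix_conj (T T' M : Matrix k k R) (h1 : T * T' = 1) :
    charmatrix (T * M * T') = (T.map C) * charmatrix M * (T'.map C) := by
  unfold charmatrix
  rw [Matrix.mul_sub, Matrix.sub_mul]
  congr 1
  · rw [← (scalar_commute (X : R[X]) (Commute.all _) (T.map C)).eq, Matrix.mul_assoc,
      ← Matrix.map_mul, h1]
    simp
  · simp [Matrix.map_mul]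

lemma my_charpoly_conj (T T' M : Matrix k k R) (h1 : T * T' = 1) :
    (T * M * T').charpoly = M.charpoly := by
  rw [Matrix.charpoly, my_charmatrix_conj T T' M h1, Matrix.det_mul, Matrix.det_mul]
  have h : T.map (C : R →+* R[X]) * T'.map C = 1 := by
    rw [← Matrix.map_mul, h1]; simp
  calc (T.map C).det * (charmatrix M).det * (T'.map C).det
      = (charmatrix M).det * ((T.map C).det * (T'.map C).det) := by ring
    _ = (charmatrix M).det * (T.map (C : R →+* R[X]) * T'.map C).det := by rw [Matrix.det_mul]
    _ = M.charpoly := by rw [h]; simp [Matrix.charpoly]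

lemma my_charpoly_diagonal (d : k → R) :
    (Matrix.diagonal d).charpoly = ∏ i : k, (X - C (d i)) := by
  have h : charmatrix (Matrix.diagonal d) = Matrix.diagonal fun i => X - C (d i) := by
    ext i j
    by_cases h : i = j
    · subst h; simp [charmatrix_apply, Matrix.diagonal_apply_eq]
    · simp [charmatrix_apply_ne _ _ _ h, Matrix.diagonal_apply_ne _ h,
        Matrix.diagonal_apply_ne' _ h]
  rw [Matrix.charpoly, h, Matrix.det_diagonal]

lemma my_charpoly_zero : (0 : Matrix k k R).charpoly = X ^ (Fintype.card k) := by
  rw [← Matrix.diagonal_zero, my_charpoly_diagonal]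
  simp

lemma my_charpoly_rect {p q : Type*} [Fintype p] [DecidableEq p] [Fintype q] [DecidableEq q]
    (A : Matrix p q R) (B : Matrix q p R) :
    (A * B).charpoly * X ^ (Fintype.card q) = (B * A).charpoly * X ^ (Fintype.card p) := by
  have key : Matrix.fromBlocks (A * B) 0 B (0 : Matrix q q R)
      = (Matrix.fromBlocks 1 A 0 1) * (Matrix.fromBlocks 0 0 B (B * A))
        * (Matrix.fromBlocks 1 (-A) 0 1) := by
    rw [Matrix.fromBlocks_multiply, Matrix.fromBlocks_multiply]
    congr 1 <;> simp [Matrix.mul_assoc]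
  have h1 : (Matrix.fromBlocks 1 A 0 1 : Matrix (p ⊕ q) (p ⊕ q) R)
      * (Matrix.fromBlocks 1 (-A) 0 1) = 1 := by
    rw [Matrix.fromBlocks_multiply]
    simp [Matrix.fromBlocks_one]
  have e1 := Matrix.charpoly_fromBlocks_zero₁₂ (M₁₁ := A * B) (M₂₁ := B)
    (M₂₂ := (0 : Matrix q q R))
  have e2 := Matrix.charpoly_fromBlocks_zero₁₂ (M₁₁ := (0 : Matrix p p R)) (M₂₁ := B)
    (M₂₂ := B * A)
  have e3 : (Matrix.fromBlocks (A * B) 0 B (0 : Matrix q q R)).charpoly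
      = (Matrix.fromBlocks 0 0 B (B * A) : Matrix (p ⊕ q) (p ⊕ q) R).charpoly := by
    rw [key]
    exact my_charpoly_conj _ _ _ h1
  rw [← my_charpoly_zero (k := q), ← e1, e3, e2, my_charpoly_zero (k := p)]
  ring

lemma my_charpoly_one_add (M : Matrix k k R) :
    (1 + M).charpoly = Polynomial.aeval (X - 1 : R[X]) M.charpoly := by
  have hmat : charmatrix (1 + M) = (charmatrix M).map (Polynomial.aeval (X - 1 : R[X])) := by
    ext i j
    by_cases h : i = j
    · subst h
      simp [charmatrix_apply_eq, Matrix.one_apply, Matrix.add_apply, map_sub,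
        Polynomial.aeval_X, Polynomial.aeval_C]
      ring
    · simp [charmatrix_apply_ne _ _ _ h, Matrix.add_apply, Matrix.one_apply_ne h,
        Polynomial.aeval_C]
  rw [Matrix.charpoly, hmat,
    show (charmatrix M).map (Polynomial.aeval (X - 1 : R[X]))
      = (Polynomial.aeval (X - 1 : R[X])).mapMatrix (charmatrix M) from rfl,
    ← AlgHom.map_det]
  rfl

end CharpolyLemmas

/-! ### Selection operator lemmas -/

section Selection

variable {ζ m n : ℕ} [NeZero m] [NeZero n]

def cmap (ζ : ℕ) (m n : ℕ) [NeZero m] (p : ZMod m) : ZMod n := ((ζ * p.val : ℕ) : ZMod n)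

omit [NeZero n] in
lemma cmap_add (hn : n = ζ * m) (p d : ZMod m) :
    cmap ζ m n (p + d) = cmap ζ m n p + cmap ζ m n d := by
  unfold cmap
  rw [← Nat.cast_add, ← Nat.mul_add, ZMod.natCast_eq_natCast_iff]
  rw [ZMod.val_add, hn]
  exact Nat.ModEq.mul_left' ζ (Nat.mod_modEq _ m)

lemma selectionOp_apply (hζ : 0 < ζ) (hn : n = ζ * m) (p : ZMod m) (a : ZMod n) :
    selectionOp ζ m n p a = if a = cmap ζ m n p then 1 else 0 := by
  have hlt : ζ * p.val < n := by
    rw [hn]; exact (Nat.mul_lt_mul_left hζ).mpr (ZMod.val_lt p)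
  have hval : (cmap ζ m n p).val = ζ * p.val := ZMod.val_cast_of_lt hlt
  unfold selectionOp
  simp only [Matrix.of_apply]
  congr 1
  simp only [eq_iff_iff]
  constructor
  · intro h
    have ha : a = ((a.val : ℕ) : ZMod n) := (ZMod.natCast_rightInverse a).symm
    rw [ha, h]; rfl
  · intro h; rw [h, hval]

lemma HMH_apply (hζ : 0 < ζ) (hn : n = ζ * m) (M : Matrix (ZMod n) (ZMod n) ℝ)
    (p q : ZMod m) :
    (selectionOp ζ m n * M * (selectionOp ζ m n).transpose) p q
      = M (cmap ζ m n p) (cmap ζ m n q) := by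
  rw [Matrix.mul_apply]
  have h1 : ∀ b, (selectionOp ζ m n * M) p b = M (cmap ζ m n p) b := by
    intro b
    rw [Matrix.mul_apply]
    simp [selectionOp_apply hζ hn, ite_mul]
  calc ∑ b, (selectionOp ζ m n * M) p b * (selectionOp ζ m n).transpose b q
      = ∑ b, M (cmap ζ m n p) b * (if b = cmap ζ m n q then 1 else 0) := by
        refine Finset.sum_congr rfl fun b _ => ?_
        rw [h1 b, Matrix.transpose_apply, selectionOp_apply hζ hn]
    _ = M (cmap ζ m n p) (cmap ζ m n q) := by simp [mul_ite]

lemma HMH_circulant (hζ : 0 < ζ) (hn : n = ζ * m) (M : Matrix (ZMod n) (ZMod n) ℝ)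
    (hM : IsCirculant M) :
    IsCirculant (selectionOp ζ m n * M * (selectionOp ζ m n).transpose) := by
  intro p q d
  rw [HMH_apply hζ hn, HMH_apply hζ hn, cmap_add hn, cmap_add hn]
  exact hM _ _ _

end Selection

lemma IsCirculant.map' {m : ℕ} {α β : Type*} {A : Matrix (ZMod m) (ZMod m) α}
    (hA : IsCirculant A) (f : α → β) : IsCirculant (A.map f) := by
  intro i j d; simp only [Matrix.map_apply]; rw [hA]

/-! ### Reality of Fourier eigenvalues of symmetric circulant matrices -/

lemma conj_ww (m : ℕ) : (starRingEnd ℂ) (ww m) = (ww m)⁻¹ := by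
  rw [ww, ← Complex.exp_conj, ← Complex.exp_neg]
  congr 1
  simp [map_div₀, Complex.conj_I, map_ofNat]
  ring

lemma conj_ee (m : ℕ) [NeZero m] (a : ZMod m) : (starRingEnd ℂ) (ee m a) = ee m (-a) := by
  rw [ee, map_pow, conj_ww, inv_pow, ← ee, ee_inv]

lemma fourierEig_real (m : ℕ) [NeZero m] (A : Matrix (ZMod m) (ZMod m) ℂ)
    (hA : IsCirculant A) (hsymm : A.transpose = A)
    (hreal : ∀ k l, (starRingEnd ℂ) (A k l) = A k l) (i : ZMod m) :
    ((fourierEig A i).re : ℂ) = fourierEig A i := by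
  rw [← Complex.conj_eq_iff_re]
  rw [fourierEig_eq, map_sum]
  calc ∑ k : ZMod m, (starRingEnd ℂ) (A k 0 * ee m (i * k))
      = ∑ k : ZMod m, A (-k) 0 * ee m (i * k) := by
        refine Fintype.sum_equiv (Equiv.neg (ZMod m)) _ _ fun k => ?_
        simp only [Equiv.neg_apply]
        rw [_root_.map_mul, hreal, conj_ee, neg_neg]
        congr 1
        congr 1
        ring
    _ = ∑ k : ZMod m, A k 0 * ee m (i * k) := by
        refine Finset.sum_congr rfl fun k _ => ?_
        congr 1
        have h1 : A (-k) 0 = A 0 k := by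
          have := hA (-k) 0 k
          rw [neg_add_cancel, zero_add] at this
          exact this.symm
        rw [h1, ← Matrix.transpose_apply A k 0, hsymm]

/-! ### Matrix map by `Complex.ofReal` -/

lemma mapC_mul {k : Type*} [Fintype k] (M N : Matrix k k ℝ) :
    (M * N).map Complex.ofReal = M.map Complex.ofReal * N.map Complex.ofReal := by
  ext i j
  simp only [Matrix.map_apply, Matrix.mul_apply]
  push_cast
  rfl

lemma mapC_one {k : Type*} [Fintype k] [DecidableEq k] :
    (1 : Matrix k k ℝ).map Complex.ofReal = 1 := by
  ext i j
  simp [Matrix.map_apply, Matrix.one_apply, apply_ite]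

theorem stmt3 (ζ m n : ℕ) [NeZero m] [NeZero n] (hζ : 0 < ζ) (hn : n = ζ * m)
    (hmn : m < n)
    (B U : Matrix (ZMod n) (ZMod n) ℝ) (R : Matrix (ZMod m) (ZMod m) ℝ)
    (hBcirc : IsCirculant B) (hBpd : B.PosDef)
    (hRcirc : IsCirculant R) (hRpd : R.PosDef)
    (hUsymm : U.IsSymm) (hUpd : U.PosDef) (hUU : U * U = B)
    (H : Matrix (ZMod m) (ZMod n) ℝ) (hH : H = selectionOp ζ m n)
    (S : Matrix (ZMod n) (ZMod n) ℝ)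
    (hS : S = 1 + U.transpose * H.transpose * R⁻¹ * H * U) :
    S.charpoly = (Polynomial.X - 1) ^ (n - m) *
      ∏ i : ZMod m, (Polynomial.X - Polynomial.C
        (1 + (fourierEig ((H * B * H.transpose).map Complex.ofReal) i).re /
              (fourierEig (R.map Complex.ofReal) i).re)) := by
  subst hS hH
  set Hs := selectionOp ζ m n with hHs
  set Cc : Matrix (ZMod m) (ZMod m) ℝ := Hs * B * Hs.transpose with hCc
  set N : Matrix (ZMod m) (ZMod m) ℝ := R⁻¹ * Cc with hNdef
  set Rc : Matrix (ZMod m) (ZMod m) ℂ := R.map Complex.ofReal with hRc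
  set Cz : Matrix (ZMod m) (ZMod m) ℂ := Cc.map Complex.ofReal with hCz
  -- the low-dimensional partner
  have hBA : (R⁻¹ * Hs * U) * (U * Hs.transpose) = N := by
    rw [hNdef, hCc, ← hUU]
    simp only [Matrix.mul_assoc]
  -- rectangular charpoly identity
  have hrect := my_charpoly_rect (U * Hs.transpose) (R⁻¹ * Hs * U)
  rw [hBA, ZMod.card, ZMod.card] at hrect
  have hMeq : U.transpose * Hs.transpose * R⁻¹ * Hs * U
      = (U * Hs.transpose) * (R⁻¹ * Hs * U) := by
    rw [hUsymm]
    simp only [Matrix.mul_assoc]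
  have hXm_ne : (X : ℝ[X]) ^ m ≠ 0 := pow_ne_zero m Polynomial.X_ne_zero
  have hMcp : (U.transpose * Hs.transpose * R⁻¹ * Hs * U).charpoly
      = N.charpoly * X ^ (n - m) := by
    rw [hMeq]
    refine mul_right_cancel₀ hXm_ne ?_
    rw [hrect]
    rw [mul_assoc, ← pow_add]
    congr 2
    omega
  -- Fourier diagonalization of N over ℂ
  have hRcirc' : IsCirculant Rc := hRcirc.map' _
  have hCcirc : IsCirculant Cc := HMH_circulant hζ hn B hBcirc
  have hCcirc' : IsCirculant Cz := hCcirc.map' _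
  have hDR : Gm m * Rc * Fm m = Matrix.diagonal (fourierEig Rc) := by
    rw [Matrix.mul_assoc, circ_mul_Fm m Rc hRcirc', ← Matrix.mul_assoc, Gm_mul_Fm, one_mul]
  have hDC : Gm m * Cz * Fm m = Matrix.diagonal (fourierEig Cz) := by
    rw [Matrix.mul_assoc, circ_mul_Fm m Cz hCcirc', ← Matrix.mul_assoc, Gm_mul_Fm, one_mul]
  have hRunit : IsUnit R.det := hRpd.det_pos.ne'.isUnit
  have hRinv : R * R⁻¹ = 1 := Matrix.mul_nonsing_inv R hRunit
  have hRRc : Rc * ((R⁻¹).map Complex.ofReal) = 1 := by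
    rw [hRc, ← mapC_mul, hRinv, mapC_one]
  set Q := Gm m * ((R⁻¹).map Complex.ofReal) * Fm m with hQdef
  have hQ : Matrix.diagonal (fourierEig Rc) * Q = 1 := by
    rw [← hDR, hQdef]
    calc (Gm m * Rc * Fm m) * (Gm m * (R⁻¹).map Complex.ofReal * Fm m)
        = Gm m * (Rc * ((Fm m * Gm m) * (R⁻¹).map Complex.ofReal)) * Fm m := by
          simp only [Matrix.mul_assoc]
      _ = 1 := by
          rw [Fm_mul_Gm, one_mul, ← Matrix.mul_assoc,
            Matrix.mul_assoc (Gm m) Rc ((R⁻¹).map Complex.ofReal), hRRc,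
            Matrix.mul_one, Gm_mul_Fm]
  have hdet_ne : (Matrix.diagonal (fourierEig Rc)).det ≠ 0 := by
    intro h0
    have hd := congrArg Matrix.det hQ
    rw [Matrix.det_mul, h0, zero_mul, Matrix.det_one] at hd
    exact zero_ne_one hd
  have hlamR : ∀ i, fourierEig Rc i ≠ 0 := by
    intro i hzero
    rw [Matrix.det_diagonal] at hdet_ne
    exact hdet_ne (Finset.prod_eq_zero (Finset.mem_univ i) hzero)
  have h2 : Matrix.diagonal (fourierEig Rc)
      * Matrix.diagonal (fun i => (fourierEig Rc i)⁻¹) = 1 := by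
    rw [Matrix.diagonal_mul_diagonal]
    have hfun : (fun i => fourierEig Rc i * (fourierEig Rc i)⁻¹) = fun _ : ZMod m => (1 : ℂ) :=
      funext fun i => mul_inv_cancel₀ (hlamR i)
    rw [hfun, Matrix.diagonal_one]
  have hQdiag : Q = Matrix.diagonal (fun i => (fourierEig Rc i)⁻¹) :=
    Matrix.right_inv_eq_right_inv hQ h2
  have hND : Gm m * (N.map Complex.ofReal) * Fm m
      = Matrix.diagonal (fun i => (fourierEig Rc i)⁻¹ * fourierEig Cz i) := by
    rw [hNdef, mapC_mul, ← hCz]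
    calc Gm m * ((R⁻¹).map Complex.ofReal * Cz) * Fm m
        = (Gm m * (R⁻¹).map Complex.ofReal * Fm m) * (Gm m * Cz * Fm m) := by
          rw [show (Gm m * (R⁻¹).map Complex.ofReal * Fm m) * (Gm m * Cz * Fm m)
            = Gm m * ((R⁻¹).map Complex.ofReal * ((Fm m * Gm m) * Cz)) * Fm m by
              simp only [Matrix.mul_assoc], Fm_mul_Gm, one_mul]
      _ = Matrix.diagonal (fun i => (fourierEig Rc i)⁻¹ * fourierEig Cz i) := by
          rw [← hQdef, hQdiag, hDC, Matrix.diagonal_mul_diagonal]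
  have hNcpC : (N.map Complex.ofReal).charpoly
      = ∏ i : ZMod m, (X - C ((fourierEig Rc i)⁻¹ * fourierEig Cz i)) := by
    rw [← my_charpoly_conj (Gm m) (Fm m) (N.map Complex.ofReal) (Gm_mul_Fm m), hND,
      my_charpoly_diagonal]
  -- reality of the eigenvalues
  have hBsymm : B.transpose = B := by
    have := hBpd.1
    simpa [Matrix.IsHermitian, Matrix.conjTranspose_eq_transpose_of_trivial] using this
  have hRsymm : R.transpose = R := by
    have := hRpd.1
    simpa [Matrix.IsHermitian, Matrix.conjTranspose_eq_transpose_of_trivial] using this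
  have hCsym : Cc.transpose = Cc := by
    rw [hCc, Matrix.transpose_mul, Matrix.transpose_mul, Matrix.transpose_transpose, hBsymm]
    simp only [Matrix.mul_assoc]
  have hCzsym : Cz.transpose = Cz := by
    rw [hCz, ← Matrix.transpose_map, hCsym]
  have hRzsym : Rc.transpose = Rc := by
    rw [hRc, ← Matrix.transpose_map, hRsymm]
  have hRreal : ∀ i, ((fourierEig Rc i).re : ℂ) = fourierEig Rc i := by
    intro i
    refine fourierEig_real m Rc hRcirc' hRzsym (fun k l => ?_) i
    rw [hRc]
    simp [Matrix.map_apply, Complex.conj_ofReal]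
  have hCreal : ∀ i, ((fourierEig Cz i).re : ℂ) = fourierEig Cz i := by
    intro i
    refine fourierEig_real m Cz hCcirc' hCzsym (fun k l => ?_) i
    rw [hCz]
    simp [Matrix.map_apply, Complex.conj_ofReal]
  -- transfer to ℝ
  have hNcp : N.charpoly
      = ∏ i : ZMod m, (X - C ((fourierEig Cz i).re / (fourierEig Rc i).re)) := by
    have hinj : Function.Injective (Polynomial.map (Complex.ofRealHom : ℝ →+* ℂ)) :=
      Polynomial.map_injective _ Complex.ofReal_injective
    apply hinj
    rw [show Polynomial.map (Complex.ofRealHom : ℝ →+* ℂ) N.charpoly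
        = (N.map Complex.ofReal).charpoly from (Matrix.charpoly_map N Complex.ofRealHom).symm]
    rw [hNcpC, Polynomial.map_prod]
    refine (Finset.prod_congr rfl fun i _ => ?_).symm
    rw [Polynomial.map_sub, Polynomial.map_X, Polynomial.map_C]
    congr 1
    congr 1
    show (((fourierEig Cz i).re / (fourierEig Rc i).re : ℝ) : ℂ)
      = (fourierEig Rc i)⁻¹ * fourierEig Cz i
    rw [Complex.ofReal_div, hCreal i, hRreal i, div_eq_inv_mul]
  -- final assembly
  rw [my_charpoly_one_add, hMcp, hNcp]
  rw [_root_.map_mul, map_pow, Polynomial.aeval_X, map_prod]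
  rw [mul_comm]
  congr 1
  refine Finset.prod_congr rfl fun i _ => ?_
  rw [map_sub, Polynomial.aeval_X, Polynomial.aeval_C, map_add, Polynomial.C_1]
  simp only [Polynomial.algebraMap_eq]
  ring
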